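/- The two-level divided difference evaluates as n!·exp[a₀, −a₀/n, …, −a₀/n] = n·e^{a₀}·a^{−n}·γ(n,a), where the node −a₀/n is repeated n times, a = (n+1)a₀/n, and γ is the lower incomplete gamma function. -/

import Mathlib

open MeasureTheory Real Filter Finset Asymptotics

/-- Divided difference of the exponential at nodes `x 0, …, x n`
(Hermite–Genocchi iterated-integral form, valid for repeated nodes). -/
noncomputable def expDD {n : ℕ} (x : Fin (n + 1) → ℝ) : ℝ :=
  ∫ t in {t : Fin n → ℝ | (∀ i, 0 ≤ t i ∧ t i ≤ 1) ∧ ∀ i j : Fin n, i ≤ j → t j ≤ t i},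
    Real.exp (x 0 + ∑ i : Fin n, t i * (x i.succ - x i.castSucc))

/-- Node tuple `a 0 ≤ … ≤ a (n-1)` followed by `x` with multiplicity `p+1`
and `y` with multiplicity `q+1`. -/
noncomputable def nodesPQ (n p q : ℕ) (a : Fin n → ℝ) (x y : ℝ) :
    Fin (n + (p + 1) + (q + 1)) → ℝ := fun i =>
  if h : (i : ℕ) < n then a ⟨i, h⟩ else if (i : ℕ) < n + (p + 1) then x else y

/-- `Kₙ(x,y) = exp[a₁,…,aₙ, x^(p+1), y^(q+1)]`. -/
noncomputable def Kn (n p q : ℕ) (a : Fin n → ℝ) (x y : ℝ) : ℝ :=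
  expDD (nodesPQ n p q a x y)

/-- Beta-weighted integral form of `exp[x^(p+1), y^(q+1)]`. -/
noncomputable def K0int (p q : ℕ) (x y : ℝ) : ℝ :=
  (1 / ((Nat.factorial p : ℝ) * (Nat.factorial q : ℝ))) *
    ∫ τ in (0:ℝ)..1, τ ^ p * (1 - τ) ^ q * Real.exp (τ * x + (1 - τ) * y)

/-- First divided difference of the exponential. -/
noncomputable def dd1 (x y : ℝ) : ℝ :=
  if x = y then Real.exp x else (Real.exp x - Real.exp y) / (x - y)

/-- `h(x,y) = eˣ + eʸ − 2·exp[x,y]`. -/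
noncomputable def hxy (x y : ℝ) : ℝ := Real.exp x + Real.exp y - 2 * dd1 x y

/-- `φ(u) = cosh u − sinh u / u`, with `φ(0)=0`. -/
noncomputable def phi (u : ℝ) : ℝ :=
  if u = 0 then 0 else Real.cosh u - Real.sinh u / u

/-- Lower incomplete gamma `γ(n,z) = ∫₀ᶻ t^(n-1) e^(−t) dt` (oriented integral). -/
noncomputable def lowerGamma (n : ℕ) (z : ℝ) : ℝ :=
  ∫ t in (0:ℝ)..z, t ^ (n - 1) * Real.exp (-t)

/-- Sum of the `k` largest coordinates of `y`. -/
noncomputable def topSum {m : ℕ} (k : ℕ) (y : Fin m → ℝ) : ℝ :=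
  sSup {t : ℝ | ∃ S : Finset (Fin m), S.card = k ∧ t = ∑ i ∈ S, y i}

/-- `e^{−t[x₀,…,x_m]}`: the divided difference of `s ↦ e^{−t s}` at the nodes `x`. -/
noncomputable def ddExpNeg (t : ℝ) {m : ℕ} (x : Fin (m + 1) → ℝ) : ℝ :=
  (-t) ^ m * expDD fun i => -t * x i


section Aux


def ordSet (m : ℕ) (c : ℝ) : Set (Fin m → ℝ) :=
  {t | (∀ i, 0 ≤ t i ∧ t i ≤ c) ∧ ∀ i j : Fin m, i ≤ j → t j ≤ t i}

lemma ordSet_isClosed (m : ℕ) (c : ℝ) : IsClosed (ordSet m c) := by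
  have h : ordSet m c =
      (⋂ i, {t : Fin m → ℝ | 0 ≤ t i} ∩ {t | t i ≤ c}) ∩
      ⋂ i, ⋂ j, ⋂ (_ : i ≤ j), {t : Fin m → ℝ | t j ≤ t i} := by
    ext t
    simp only [ordSet, Set.mem_setOf_eq, Set.mem_inter_iff, Set.mem_iInter, Set.mem_setOf_eq,
      forall_and]
  rw [h]
  exact (isClosed_iInter fun i => (isClosed_le continuous_const (continuous_apply i)).inter
      (isClosed_le (continuous_apply i) continuous_const)).inter
    (isClosed_iInter fun i => isClosed_iInter fun j => isClosed_iInter fun _ =>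
      isClosed_le (continuous_apply j) (continuous_apply i))

lemma ordSet_isCompact (m : ℕ) (c : ℝ) : IsCompact (ordSet m c) := by
  refine IsCompact.of_isClosed_subset (isCompact_univ_pi fun _ : Fin m => isCompact_Icc
    (a := (0:ℝ)) (b := c)) (ordSet_isClosed m c) ?_
  intro t ht
  exact Set.mem_univ_pi.2 fun i => ⟨(ht.1 i).1, (ht.1 i).2⟩

lemma cons_mem_ordSet {m : ℕ} {c x : ℝ} (y : Fin m → ℝ) :
    Fin.cons x y ∈ ordSet (m + 1) c ↔ x ∈ Set.Icc 0 c ∧ y ∈ ordSet m x := by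
  constructor
  · rintro ⟨h1, h2⟩
    refine ⟨⟨by simpa using (h1 0).1, by simpa using (h1 0).2⟩,
      fun j => ⟨by simpa using (h1 j.succ).1,
        by simpa using h2 0 j.succ (Fin.zero_le _)⟩,
      fun i j hij => by simpa using h2 i.succ j.succ (Fin.succ_le_succ_iff.2 hij)⟩
  · rintro ⟨⟨hx0, hxc⟩, h1, h2⟩
    constructor
    · intro i
      induction i using Fin.cases with
      | zero => simpa using ⟨hx0, hxc⟩
      | succ j => simpa using ⟨(h1 j).1, le_trans (h1 j).2 hxc⟩
    · intro i j hij
      induction j using Fin.cases with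
      | zero =>
          have : i = 0 := Fin.le_zero_iff.mp hij
          subst this; exact le_refl _
      | succ j' =>
          induction i using Fin.cases with
          | zero => simpa using le_trans (h1 j').2 (le_refl x)
          | succ i' => simpa using h2 i' j' (Fin.succ_le_succ_iff.mp hij)

lemma volume_ordSet : ∀ (m : ℕ) (c : ℝ), 0 ≤ c →
    volume (ordSet m c) = ENNReal.ofReal (c ^ m / m.factorial)
  | 0, c, hc => by
    have h : ordSet 0 c = Set.univ := by
      ext t; simp [ordSet]
    rw [h, ← Set.pi_univ (Set.univ : Set (Fin 0))]
    rw [show (volume : Measure (Fin 0 → ℝ)) = Measure.pi (fun _ => volume) from rfl,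
      Measure.pi_pi]
    simp
  | m + 1, c, hc => by
    have ih := volume_ordSet m
    have hmp := MeasureTheory.volume_preserving_piFinSuccAbove (fun _ : Fin (m + 1) => ℝ) 0
    set e := MeasurableEquiv.piFinSuccAbove (fun _ : Fin (m + 1) => ℝ) 0 with he
    have hmeas : MeasurableSet (ordSet (m + 1) c) := (ordSet_isClosed _ _).measurableSet
    have key : volume (e.symm ⁻¹' ordSet (m + 1) c) = volume (ordSet (m + 1) c) :=
      (MeasurePreserving.symm e hmp).measure_preimage hmeas.nullMeasurableSet
    rw [← key, Measure.volume_eq_prod, Measure.prod_apply (e.symm.measurable hmeas)]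
    have hslice : ∀ x : ℝ, volume (Prod.mk x ⁻¹' (e.symm ⁻¹' ordSet (m + 1) c)) =
        (Set.Icc (0:ℝ) c).indicator (fun x => ENNReal.ofReal (x ^ m / m.factorial)) x := by
      intro x
      have hpre : Prod.mk x ⁻¹' (e.symm ⁻¹' ordSet (m + 1) c) =
          {y : Fin m → ℝ | Fin.cons x y ∈ ordSet (m + 1) c} := by
        ext y
        simp [e, Fin.insertNth_zero', Fin.consEquiv]
      rw [hpre]
      by_cases hx : x ∈ Set.Icc (0:ℝ) c
      · have h2 : {y : Fin m → ℝ | Fin.cons x y ∈ ordSet (m + 1) c} = ordSet m x := by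
          ext y; simp [cons_mem_ordSet, hx]
        rw [h2, ih x hx.1, Set.indicator_of_mem hx]
      · have h2 : {y : Fin m → ℝ | Fin.cons x y ∈ ordSet (m + 1) c} = ∅ := by
          ext y; simp [cons_mem_ordSet, hx]
        rw [h2, Set.indicator_of_notMem hx]
        simp
    rw [lintegral_congr hslice, lintegral_indicator measurableSet_Icc,
      ← ofReal_integral_eq_lintegral_ofReal]
    · rw [MeasureTheory.integral_Icc_eq_integral_Ioc,
        ← intervalIntegral.integral_of_le hc, intervalIntegral.integral_div, integral_pow]
      congr 1
      rw [Nat.factorial_succ]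
      push_cast
      have h1 : (m.factorial : ℝ) ≠ 0 := Nat.cast_ne_zero.2 m.factorial_ne_zero
      field_simp
      simp
    · exact ((continuous_pow m).div_const _).integrableOn_Icc
    · filter_upwards [ae_restrict_mem measurableSet_Icc] with x hx
      have : (0:ℝ) ≤ x := hx.1
      positivity

lemma integral_ordSet (m : ℕ) (f : ℝ → ℝ) (hf : Continuous f) :
    ∫ t in ordSet (m + 1) 1, f (t 0) =
      ∫ x in (0:ℝ)..1, f x * (x ^ m / m.factorial) := by
  have hmp := MeasureTheory.volume_preserving_piFinSuccAbove (fun _ : Fin (m + 1) => ℝ) 0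
  set e := MeasurableEquiv.piFinSuccAbove (fun _ : Fin (m + 1) => ℝ) 0 with he
  have hS : MeasurableSet (ordSet (m + 1) 1) := (ordSet_isClosed _ _).measurableSet
  set F : (Fin (m + 1) → ℝ) → ℝ := (ordSet (m + 1) 1).indicator (fun t => f (t 0)) with hF
  have hFi : Integrable F := by
    rw [hF, integrable_indicator_iff hS]
    exact ((hf.comp (continuous_apply 0)).continuousOn).integrableOn_compact
      (ordSet_isCompact _ _)
  have h1 : ∫ t in ordSet (m + 1) 1, f (t 0) = ∫ t, F t := (integral_indicator hS).symm
  rw [h1, ← (MeasurePreserving.symm e hmp).integral_comp' F]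
  have hFi2 : Integrable (fun p : ℝ × (Fin m → ℝ) => F (e.symm p))
      ((volume : Measure ℝ).prod (volume : Measure (Fin m → ℝ))) := by
    rw [← Measure.volume_eq_prod]
    exact ((MeasurePreserving.symm e hmp).integrable_comp_emb e.symm.measurableEmbedding).2 hFi
  rw [show ∫ p, F (e.symm p) ∂(volume : Measure (ℝ × (Fin m → ℝ)))
      = ∫ p, F (e.symm p) ∂((volume : Measure ℝ).prod volume) from rfl,
    MeasureTheory.integral_prod _ hFi2]
  have hcons : ∀ (x : ℝ) (y : Fin m → ℝ), e.symm (x, y) = Fin.cons x y := by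
    intro x y
    simp [e, Fin.insertNth_zero', Fin.consEquiv]
  have hinner : ∀ x : ℝ, (∫ y : Fin m → ℝ, F (e.symm (x, y))) =
      (Set.Icc (0:ℝ) 1).indicator (fun x => f x * (x ^ m / m.factorial)) x := by
    intro x
    have h2 : (fun y : Fin m → ℝ => F (e.symm (x, y))) =
        Set.indicator {y : Fin m → ℝ | Fin.cons x y ∈ ordSet (m + 1) 1} (fun _ => f x) := by
      funext y
      by_cases hy : Fin.cons x y ∈ ordSet (m + 1) 1 <;>
        simp [hF, Set.indicator, hy, hcons]
    rw [h2]
    by_cases hx : x ∈ Set.Icc (0:ℝ) 1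
    · have hset : {y : Fin m → ℝ | Fin.cons x y ∈ ordSet (m + 1) 1} = ordSet m x := by
        ext y; simp [cons_mem_ordSet, hx]
      rw [hset, integral_indicator (ordSet_isClosed m x).measurableSet, setIntegral_const,
        Set.indicator_of_mem hx, measureReal_def, volume_ordSet m x hx.1,
        ENNReal.toReal_ofReal (by have := hx.1; positivity), smul_eq_mul, mul_comm]
    · have hset : {y : Fin m → ℝ | Fin.cons x y ∈ ordSet (m + 1) 1} = ∅ := by
        ext y; simp [cons_mem_ordSet, hx]
      rw [hset, Set.indicator_of_notMem hx]
      simp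
  rw [integral_congr_ae (ae_of_all _ hinner), integral_indicator measurableSet_Icc,
    MeasureTheory.integral_Icc_eq_integral_Ioc, ← intervalIntegral.integral_of_le zero_le_one]

end Aux

theorem stmt17 (n : ℕ) (hn : 1 ≤ n) (a₀ : ℝ) (ha : a₀ ≠ 0) :
    (n.factorial : ℝ) * expDD (fun i : Fin (n + 1) => if i = 0 then a₀ else -a₀ / n)
      = n * Real.exp a₀ * ((n + 1) * a₀ / n) ^ (-(n : ℤ))
          * lowerGamma n ((n + 1) * a₀ / n) := by
  obtain ⟨m, rfl⟩ : ∃ m, n = m + 1 := ⟨n - 1, by omega⟩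
  set N : ℝ := (m : ℝ) + 1 with hN
  have hNpos : (0:ℝ) < N := by positivity
  have hNcast : ((m + 1 : ℕ) : ℝ) = N := by push_cast [hN]; ring
  set A : ℝ := (N + 1) * a₀ / N with hA
  have hAne : A ≠ 0 := by
    rw [hA]
    apply div_ne_zero (mul_ne_zero (by positivity) ha) hNpos.ne'
  -- simplify the node function and integrand
  have hx : ∀ t : Fin (m + 1) → ℝ,
      ((fun i : Fin (m + 1 + 1) => if i = 0 then a₀ else -a₀ / ((m+1:ℕ) : ℝ)) 0
        + ∑ i : Fin (m + 1), t i *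
          ((fun i : Fin (m + 1 + 1) => if i = 0 then a₀ else -a₀ / ((m+1:ℕ):ℝ)) i.succ
            - (fun i : Fin (m + 1 + 1) => if i = 0 then a₀ else -a₀ / ((m+1:ℕ):ℝ)) i.castSucc))
      = a₀ - A * t 0 := by
    intro t
    have hdiff : (-a₀ / ((m+1:ℕ):ℝ)) - a₀ = -A := by
      rw [hNcast, hA, hN]
      field_simp
      ring
    have hsum : ∑ i : Fin (m + 1), t i *
        ((if i.succ = (0 : Fin (m + 1 + 1)) then a₀ else -a₀ / ((m+1:ℕ):ℝ))
          - (if i.castSucc = (0 : Fin (m + 1 + 1)) then a₀ else -a₀ / ((m+1:ℕ):ℝ)))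
        = t 0 * (-A) := by
      rw [Fintype.sum_eq_single 0]
      · rw [if_neg (Fin.succ_ne_zero (0 : Fin (m + 1))), Fin.castSucc_zero, if_pos rfl, hdiff]
      · intro i hi
        rw [if_neg (Fin.succ_ne_zero i),
          if_neg (by simpa [Fin.castSucc_eq_zero_iff] using hi)]
        ring
    beta_reduce
    rw [if_pos rfl, hsum]
    ring
  have hexp : expDD (fun i : Fin (m + 1 + 1) => if i = 0 then a₀ else -a₀ / ((m+1:ℕ):ℝ))
      = ∫ x in (0:ℝ)..1, Real.exp (a₀ - A * x) * (x ^ m / m.factorial) := by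
    rw [expDD]
    rw [show {t : Fin (m+1) → ℝ | (∀ i, 0 ≤ t i ∧ t i ≤ 1) ∧ ∀ i j : Fin (m+1), i ≤ j → t j ≤ t i}
      = ordSet (m + 1) 1 from rfl]
    have hfun : (fun t : Fin (m+1) → ℝ => Real.exp
        ((fun i : Fin (m + 1 + 1) => if i = 0 then a₀ else -a₀ / ((m+1:ℕ):ℝ)) 0
        + ∑ i : Fin (m + 1), t i *
          ((fun i : Fin (m + 1 + 1) => if i = 0 then a₀ else -a₀ / ((m+1:ℕ):ℝ)) i.succ
            - (fun i : Fin (m + 1 + 1) => if i = 0 then a₀ else -a₀ / ((m+1:ℕ):ℝ)) i.castSucc)))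
      = fun t => Real.exp (a₀ - A * t 0) := by
      funext t
      rw [hx t]
    rw [hfun]
    exact integral_ordSet m (fun u => Real.exp (a₀ - A * u)) (by continuity)
  rw [hexp]
  -- RHS
  have hgamma : lowerGamma (m + 1) A = A * ∫ x in (0:ℝ)..1, (A * x) ^ m * Real.exp (-(A * x)) := by
    rw [lowerGamma]
    have := intervalIntegral.integral_comp_mul_left (a := (0:ℝ)) (b := 1)
      (fun t : ℝ => t ^ m * Real.exp (-t)) hAne
    simp only [mul_zero, mul_one] at this
    rw [this, smul_eq_mul, ← mul_assoc, mul_inv_cancel₀ hAne, one_mul]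
    norm_num
  have hNc : ((m + 1 : ℕ) : ℝ) = N := hNcast
  rw [show ((m + 1 : ℕ) + 1 : ℝ) * a₀ / ((m + 1 : ℕ) : ℝ) = A by rw [hNcast, hA]]
  rw [hgamma, hNcast]
  -- pull constants out of integrals
  have hfac : ((m + 1).factorial : ℝ) = N * m.factorial := by
    rw [Nat.factorial_succ]; push_cast [hN]; ring
  have hL : ∫ x in (0:ℝ)..1, Real.exp (a₀ - A * x) * (x ^ m / m.factorial)
      = (Real.exp a₀ / m.factorial) * ∫ x in (0:ℝ)..1, x ^ m * Real.exp (-(A * x)) := by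
    rw [← intervalIntegral.integral_const_mul]
    apply intervalIntegral.integral_congr
    intro x _
    beta_reduce
    rw [show a₀ - A * x = a₀ + -(A * x) by ring, Real.exp_add]
    ring
  have hR : ∫ x in (0:ℝ)..1, (A * x) ^ m * Real.exp (-(A * x))
      = A ^ m * ∫ x in (0:ℝ)..1, x ^ m * Real.exp (-(A * x)) := by
    rw [← intervalIntegral.integral_const_mul]
    apply intervalIntegral.integral_congr
    intro x _
    beta_reduce
    rw [mul_pow]; ring
  rw [hL, hR, hfac]
  rw [show (-((m+1:ℕ) : ℤ) : ℤ) = -(((m:ℤ))+1) by push_cast; ring]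
  rw [zpow_neg, show (((m:ℤ))+1 : ℤ) = ((m+1 : ℕ) : ℤ) by push_cast; ring, zpow_natCast]
  have hfacne : (m.factorial : ℝ) ≠ 0 := Nat.cast_ne_zero.2 m.factorial_ne_zero
  have hpow : A ^ (m + 1) = A * A ^ m := by rw [pow_succ]; ring
  field_simp [hpow]
  ring
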